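/- Let R be a commutative noetherian ring, A a finite R-algebra, I an indecomposable injective left A-module with associated prime p ⊆ R, and r ∈ R. If r ∈ p then left multiplication by r on I is locally nilpotent; if r ∉ p then left multiplication by r on I is an automorphism of I. -/

import Mathlib

/-- A module is indecomposable if it is nonzero and is not the direct sum of two nonzero
submodules. -/
def Module.Indecomposable (A : Type*) [Ring A] (M : Type*) [AddCommGroup M]
    [Module A M] : Prop :=
  Nontrivial M ∧ ∀ N N' : Submodule A M, IsCompl N N' → N = ⊥ ∨ N' = ⊥

section Aux

variable {A : Type*} [Ring A] {I : Type*} [AddCommGroup I] [Module A I]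

/-- Zorn: a maximal submodule containing `N'` and meeting `N` trivially exists. -/
theorem exists_maximal_inf_eq_bot (N N' : Submodule A I) (h : N' ⊓ N = ⊥) :
    ∃ C : Submodule A I, N' ≤ C ∧ Maximal (fun C : Submodule A I => C ⊓ N = ⊥) C := by
  obtain ⟨C, hle, hmax⟩ := zorn_le_nonempty₀ {C : Submodule A I | C ⊓ N = ⊥}
    (fun c hcs hchain y hy => by
      refine ⟨sSup c, ?_, fun z hz => le_sSup hz⟩
      rw [Set.mem_setOf_eq, eq_bot_iff]
      intro x hx
      obtain ⟨hx1, hx2⟩ := Submodule.mem_inf.mp hx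
      obtain ⟨P, hP, hxP⟩ :=
        (Submodule.mem_sSup_of_directed ⟨y, hy⟩ hchain.directedOn).1 hx1
      have hPN : P ⊓ N = ⊥ := hcs hP
      have : x ∈ P ⊓ N := Submodule.mem_inf.mpr ⟨hxP, hx2⟩
      rwa [hPN] at this) N' h
  exact ⟨C, hle, hmax⟩

/-- An indecomposable injective module is uniform: two submodules meeting trivially
cannot both be nonzero. -/
theorem uniform_of_indecomposable [Module.Injective A I]
    (hind : Module.Indecomposable A I) (N N' : Submodule A I) (h : N ⊓ N' = ⊥) :
    N = ⊥ ∨ N' = ⊥ := by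
  by_contra hcon
  push_neg at hcon
  obtain ⟨hN, hN'⟩ := hcon
  obtain ⟨C, hN'C, hC⟩ := exists_maximal_inf_eq_bot N N' (by rwa [inf_comm] at h)
  obtain ⟨D, hND, hD⟩ := exists_maximal_inf_eq_bot C N (by rw [inf_comm]; exact hC.1)
  set S : Submodule A I := C ⊔ D with hS
  have hCS : C ≤ S := le_sup_left
  have hDS : D ≤ S := le_sup_right
  set C₀ : Submodule A S := C.comap S.subtype with hC₀
  set D₀ : Submodule A S := D.comap S.subtype with hD₀
  have hcompl : IsCompl C₀ D₀ := by
    constructor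
    · rw [disjoint_iff, eq_bot_iff]
      intro x hx
      obtain ⟨hx1, hx2⟩ := Submodule.mem_inf.mp hx
      have hx1' : (x : I) ∈ C := hx1
      have hx2' : (x : I) ∈ D := hx2
      have : (x : I) ∈ D ⊓ C := Submodule.mem_inf.mpr ⟨hx2', hx1'⟩
      rw [hD.1] at this
      have : (x : I) = 0 := this
      simpa [Submodule.mem_bot] using Subtype.ext this
    · rw [codisjoint_iff, eq_top_iff]
      rintro x -
      obtain ⟨c, hc, d, hd, hcd⟩ := Submodule.mem_sup.mp x.2
      refine Submodule.mem_sup.mpr ⟨⟨c, hCS hc⟩, hc, ⟨d, hDS hd⟩, hd, ?_⟩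
      exact Subtype.ext hcd
  set π := Submodule.linearProjOfIsCompl C₀ D₀ hcompl with hπ
  set g : S →ₗ[A] I := S.subtype ∘ₗ C₀.subtype ∘ₗ π with hg
  obtain ⟨f, hf⟩ := Module.Injective.out S.subtype S.injective_subtype g
  have hfC : ∀ c ∈ C, f c = c := by
    intro c hc
    have hcS : c ∈ S := hCS hc
    have h1 : f c = g ⟨c, hcS⟩ := hf ⟨c, hcS⟩
    have h2 : π ⟨c, hcS⟩ = ⟨⟨c, hcS⟩, hc⟩ :=
      Submodule.linearProjOfIsCompl_apply_left hcompl ⟨⟨c, hcS⟩, hc⟩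
    rw [h1, hg]
    simp only [LinearMap.comp_apply, h2, Submodule.subtype_apply]
  have hfD : ∀ d ∈ D, f d = 0 := by
    intro d hd
    have hdS : d ∈ S := hDS hd
    have h1 : f d = g ⟨d, hdS⟩ := hf ⟨d, hdS⟩
    have h2 : π ⟨d, hdS⟩ = 0 :=
      Submodule.projectionOnto_apply_of_mem_right hcompl (x := ⟨d, hdS⟩) hd
    rw [h1, hg]
    simp only [LinearMap.comp_apply, h2, map_zero]
  have hDker : D ≤ LinearMap.ker f := fun d hd => LinearMap.mem_ker.mpr (hfD d hd)
  have hker : LinearMap.ker f = D := by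
    refine le_antisymm ?_ hDker
    have h1 : LinearMap.ker f ⊓ C = ⊥ := by
      rw [eq_bot_iff]
      intro x hx
      obtain ⟨hx1, hx2⟩ := Submodule.mem_inf.mp hx
      have hx1' : f x = 0 := hx1
      have : x = 0 := by rw [← hfC x hx2, hx1']
      simp [this]
    exact hD.2 h1 hDker
  have hess : ∀ x : I, f x ≠ 0 → ∃ a : A, a • f x ∈ C ∧ a • f x ≠ 0 := by
    intro x hx
    have hxD : x ∉ D := fun hxD => hx (hfD x hxD)
    have hne : (D ⊔ A ∙ x) ⊓ C ≠ ⊥ := by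
      intro hbot
      have hle : D ⊔ (A ∙ x) ≤ D := hD.2 hbot le_sup_left
      exact hxD (hle (Submodule.mem_sup_right (Submodule.mem_span_singleton_self x)))
    obtain ⟨c, hc, hc0⟩ := Submodule.exists_mem_ne_zero_of_ne_bot hne
    obtain ⟨hc1, hc2⟩ := Submodule.mem_inf.mp hc
    obtain ⟨d, hd, w, hw, hdw⟩ := Submodule.mem_sup.mp hc1
    obtain ⟨a, ha⟩ := Submodule.mem_span_singleton.mp hw
    have hfc : f c = a • f x := by
      rw [← hdw, map_add, hfD d hd, zero_add, ← ha, map_smul]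
    have hcc : a • f x = c := by rw [← hfc, hfC c hc2]
    exact ⟨a, hcc ▸ hc2, hcc ▸ hc0⟩
  have hCrange : C ≤ LinearMap.range f := fun c hc => ⟨c, hfC c hc⟩
  have hrange : LinearMap.range f = C := by
    refine le_antisymm ?_ hCrange
    have hrD : LinearMap.range f ⊓ D = ⊥ := by
      rw [eq_bot_iff]
      intro y hy
      obtain ⟨hy1, hy2⟩ := Submodule.mem_inf.mp hy
      by_contra hy0
      have hy0' : y ≠ 0 := fun h => hy0 (by simp [h])
      obtain ⟨x, rfl⟩ := hy1
      obtain ⟨a, haC, ha0⟩ := hess x hy0'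
      have h1 : a • f x ∈ D := D.smul_mem a hy2
      have h2 : a • f x ∈ D ⊓ C := Submodule.mem_inf.mpr ⟨h1, haC⟩
      rw [hD.1] at h2
      exact ha0 h2
    have hrN : LinearMap.range f ⊓ N = ⊥ := by
      rw [eq_bot_iff]
      intro y hy
      obtain ⟨hy1, hy2⟩ := Submodule.mem_inf.mp hy
      have : y ∈ LinearMap.range f ⊓ D := Submodule.mem_inf.mpr ⟨hy1, hND hy2⟩
      rwa [hrD] at this
    exact hC.2 hrN hCrange
  have hidem : ∀ x, f (f x) = f x := fun x =>
    hfC (f x) (hrange ▸ LinearMap.mem_range_self f x)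
  have hcompl2 : IsCompl (LinearMap.range f) (LinearMap.ker f) := by
    constructor
    · rw [disjoint_iff, eq_bot_iff]
      intro x hx
      obtain ⟨hx1, hx2⟩ := Submodule.mem_inf.mp hx
      obtain ⟨y, rfl⟩ := hx1
      have hx2' : f (f y) = 0 := hx2
      rw [hidem] at hx2'
      simp [hx2']
    · rw [codisjoint_iff, eq_top_iff]
      rintro x -
      refine Submodule.mem_sup.mpr ⟨f x, LinearMap.mem_range_self f x, x - f x, ?_, by abel⟩
      rw [LinearMap.mem_ker, map_sub, hidem, sub_self]
  rw [hrange, hker] at hcompl2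
  rcases hind.2 C D hcompl2 with h1 | h2
  · exact hN' (le_bot_iff.mp (h1 ▸ hN'C))
  · exact hN (le_bot_iff.mp (h2 ▸ hND))

/-- An injective A-linear endomorphism of an indecomposable injective module is surjective. -/
theorem surjective_of_injective_endo [Module.Injective A I]
    (hind : Module.Indecomposable A I) (φ : I →ₗ[A] I) (hφ : Function.Injective φ) :
    Function.Surjective φ := by
  obtain ⟨h, hh⟩ := Module.Injective.out φ hφ (LinearMap.id : I →ₗ[A] I)
  set e : I →ₗ[A] I := φ ∘ₗ h with he
  have hrangee : ∀ x, e (φ x) = φ x := by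
    intro x
    simp only [he, LinearMap.comp_apply]
    rw [hh]
    rfl
  have hee : ∀ x, e (e x) = e x := fun x => hrangee (h x)
  have hcompl : IsCompl (LinearMap.range e) (LinearMap.ker e) := by
    constructor
    · rw [disjoint_iff, eq_bot_iff]
      intro x hx
      obtain ⟨hx1, hx2⟩ := Submodule.mem_inf.mp hx
      obtain ⟨y, rfl⟩ := hx1
      have hx2' : e (e y) = 0 := hx2
      rw [hee] at hx2'
      simp [hx2']
    · rw [codisjoint_iff, eq_top_iff]
      rintro x -
      refine Submodule.mem_sup.mpr ⟨e x, LinearMap.mem_range_self e x, x - e x, ?_, by abel⟩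
      rw [LinearMap.mem_ker, map_sub, hee, sub_self]
  rcases hind.2 _ _ hcompl with h1 | h2
  · exfalso
    haveI := hind.1
    obtain ⟨x, hx⟩ := exists_ne (0 : I)
    have hmem : φ x ∈ LinearMap.range e := ⟨φ x, hrangee x⟩
    rw [h1] at hmem
    have : φ x = 0 := hmem
    exact hx (hφ (by rw [this, map_zero]))
  · have htop : LinearMap.range e = ⊤ := by
      have := hcompl.sup_eq_top
      rwa [h2, sup_bot_eq] at this
    intro y
    have : y ∈ LinearMap.range e := htop ▸ Submodule.mem_top
    obtain ⟨x, hx⟩ := this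
    exact ⟨h x, hx⟩

end Aux

/-- Let `R` be a commutative noetherian ring, `A` a finite `R`-algebra, `I` an
indecomposable injective left `A`-module with associated prime `p ⊆ R` (as an
`R`-module), and `r ∈ R`.  If `r ∈ p` then multiplication by `r` on `I` is locally
nilpotent; if `r ∉ p` then multiplication by `r` on `I` is an automorphism. -/
theorem smul_locally_nilpotent_or_bijective_of_assoc_prime
    {R A : Type*} [CommRing R] [IsNoetherianRing R] [Ring A] [Algebra R A]
    [Module.Finite R A] (I : Type*) [AddCommGroup I] [Module A I] [Module R I]
    [IsScalarTower R A I] [Module.Injective A I]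
    (hind : Module.Indecomposable A I)
    (p : Ideal R) (hp : IsAssociatedPrime p I) (r : R) :
    (r ∈ p → ∀ x : I, ∃ n : ℕ, r ^ n • x = 0) ∧
    (r ∉ p → Function.Bijective fun x : I => r • x) := by
  haveI : IsNoetherian A A := isNoetherian_of_tower R inferInstance
  have hcomm : ∀ (s : R) (a : A) (x : I), s • (a • x) = a • (s • x) := by
    intro s a x
    rw [← algebraMap_smul A s x, ← algebraMap_smul A s (a • x), ← mul_smul, ← mul_smul,
      Algebra.commutes]
  set φ : I →ₗ[A] I :=
    { toFun := fun x => r • x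
      map_add' := fun x y => smul_add r x y
      map_smul' := fun a x => hcomm r a x } with hφdef
  have hφapp : ∀ x : I, φ x = r • x := fun x => rfl
  have key : LinearMap.ker φ ≠ ⊥ → ∀ x : I, ∃ n : ℕ, r ^ n • x = 0 := by
    intro hker y
    by_contra hy
    push_neg at hy
    have mono : Monotone (fun n => LinearMap.ker (LinearMap.toSpanSingleton A I (r ^ n • y))) := by
      apply monotone_nat_of_le_succ
      intro n a ha
      rw [LinearMap.mem_ker, LinearMap.toSpanSingleton_apply] at ha ⊢
      rw [pow_succ', mul_smul, ← hcomm r a (r ^ n • y), ha, smul_zero]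
    obtain ⟨k, hk⟩ := monotone_stabilizes_iff_noetherian.mpr
      (inferInstance : IsNoetherian A A) ⟨_, mono⟩
    set z : I := r ^ k • y with hz
    have hz0 : z ≠ 0 := hy k
    have hdisj : LinearMap.ker φ ⊓ (A ∙ z) = ⊥ := by
      rw [eq_bot_iff]
      intro x hx
      obtain ⟨hx1, hx2⟩ := Submodule.mem_inf.mp hx
      obtain ⟨a, ha⟩ := Submodule.mem_span_singleton.mp hx2
      have hφx : r • x = 0 := hx1
      have hmem : a ∈ LinearMap.ker (LinearMap.toSpanSingleton A I (r ^ (k + 1) • y)) := by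
        rw [LinearMap.mem_ker, LinearMap.toSpanSingleton_apply, pow_succ', mul_smul, ← hz,
          ← hcomm r a z, ha, hφx]
      have hmem' : a ∈ LinearMap.ker (LinearMap.toSpanSingleton A I (r ^ k • y)) :=
        (le_of_eq (hk (k + 1) (Nat.le_succ k)).symm) hmem
      have haz : a • z = 0 := by
        rw [LinearMap.mem_ker, LinearMap.toSpanSingleton_apply] at hmem'
        exact hmem'
      have : x = 0 := by rw [← ha, haz]
      simp [this]
    rcases uniform_of_indecomposable hind _ _ hdisj with h1 | h2
    · exact hker h1
    · exact hz0 (Submodule.span_singleton_eq_bot.mp h2)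
  obtain ⟨hprime, x, hx⟩ := isAssociatedPrime_iff.mp hp
  have hx0 : x ≠ 0 := by
    rintro rfl
    apply hprime.ne_top
    rw [hx]
    ext s
    simp [Submodule.mem_colon_singleton]
  constructor
  · intro hr
    apply key
    rw [Submodule.ne_bot_iff]
    refine ⟨x, ?_, hx0⟩
    rw [LinearMap.mem_ker, hφapp]
    rw [hx] at hr
    simpa [Submodule.mem_colon_singleton] using hr
  · intro hr
    have hker : LinearMap.ker φ = ⊥ := by
      by_contra hker
      obtain ⟨n, hn⟩ := key hker x
      apply hr
      have hpow : r ^ n ∈ p := by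
        rw [hx]
        simpa [Submodule.mem_colon_singleton] using hn
      exact hprime.mem_of_pow_mem n hpow
    have hinj : Function.Injective φ := LinearMap.ker_eq_bot.mp hker
    exact ⟨hinj, surjective_of_injective_endo hind φ hinj⟩
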